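/- Let n ≥ 1 be an integer and a, b, a', b' ∈ ZMod n. Then there exists a 4×4 real orthogonal matrix P with det P = 1 such that P⁻¹·W(a,b)·P = W(a',b') if and only if the unordered pair {a,b} equals {a',b'} or equals {−a',−b'}; that is, if and only if (a = a' and b = b'), or (a = b' and b = a'), or (a = −a' and b = −b'), or (a = −b' and b = −a'). -/

import Mathlib

open Matrix

set_option maxHeartbeats 1600000 in
private lemma det4' (M : Matrix (Fin 4) (Fin 4) ℝ) :
    M.det =
      M 0 0 * M 1 1 * M 2 2 * M 3 3 - M 0 0 * M 1 1 * M 2 3 * M 3 2 -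
      M 0 0 * M 1 2 * M 2 1 * M 3 3 + M 0 0 * M 1 2 * M 2 3 * M 3 1 +
      M 0 0 * M 1 3 * M 2 1 * M 3 2 - M 0 0 * M 1 3 * M 2 2 * M 3 1 -
      M 0 1 * M 1 0 * M 2 2 * M 3 3 + M 0 1 * M 1 0 * M 2 3 * M 3 2 +
      M 0 1 * M 1 2 * M 2 0 * M 3 3 - M 0 1 * M 1 2 * M 2 3 * M 3 0 -
      M 0 1 * M 1 3 * M 2 0 * M 3 2 + M 0 1 * M 1 3 * M 2 2 * M 3 0 +
      M 0 2 * M 1 0 * M 2 1 * M 3 3 - M 0 2 * M 1 0 * M 2 3 * M 3 1 -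
      M 0 2 * M 1 1 * M 2 0 * M 3 3 + M 0 2 * M 1 1 * M 2 3 * M 3 0 +
      M 0 2 * M 1 3 * M 2 0 * M 3 1 - M 0 2 * M 1 3 * M 2 1 * M 3 0 -
      M 0 3 * M 1 0 * M 2 1 * M 3 2 + M 0 3 * M 1 0 * M 2 2 * M 3 1 +
      M 0 3 * M 1 1 * M 2 0 * M 3 2 - M 0 3 * M 1 1 * M 2 2 * M 3 0 -
      M 0 3 * M 1 2 * M 2 0 * M 3 1 + M 0 3 * M 1 2 * M 2 1 * M 3 0 := by
  rw [Matrix.det_succ_row_zero]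
  simp (config := { decide := true }) [Fin.sum_univ_succ, Matrix.det_fin_three,
    Matrix.submatrix_apply, Fin.succAbove,
    show (Fin.succ 2 : Fin 4) = 3 from rfl, show (Fin.castSucc 2 : Fin 4) = 2 from rfl]
  ring

set_option maxHeartbeats 1600000 in
private lemma pf_conj' (c1 s1 c2 s2 : ℝ) (P M : Matrix (Fin 4) (Fin 4) ℝ)
    (hM : M = Pᵀ * !![c1,-s1,0,0;s1,c1,0,0;0,0,c2,-s2;0,0,s2,c2] * P) :
    (M 0 1 - M 1 0) * (M 2 3 - M 3 2) - (M 0 2 - M 2 0) * (M 1 3 - M 3 1)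
      + (M 0 3 - M 3 0) * (M 1 2 - M 2 1) = P.det * (4 * s1 * s2) := by
  subst hM
  rw [det4']
  simp [Matrix.mul_apply, Fin.sum_univ_four]
  ring

/-- The 2×2 rotation matrix through angle `2πa/n`, for `a : ZMod n`. -/
noncomputable def rotMat (n : ℕ) (a : ZMod n) : Matrix (Fin 2) (Fin 2) ℝ :=
  !![Real.cos (2 * Real.pi * a.val / n), -Real.sin (2 * Real.pi * a.val / n);
     Real.sin (2 * Real.pi * a.val / n),  Real.cos (2 * Real.pi * a.val / n)]

/-- The 4×4 block-diagonal matrix with blocks `rotMat n a` and `rotMat n b`. -/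
noncomputable def Wmat (n : ℕ) (a b : ZMod n) : Matrix (Fin 4) (Fin 4) ℝ :=
  Matrix.reindex finSumFinEquiv finSumFinEquiv
    (Matrix.fromBlocks (rotMat n a) 0 0 (rotMat n b))

section Aux
variable (n : ℕ) [NeZero n]

private noncomputable def Cz (x : ZMod n) : ℝ := Real.cos (2 * Real.pi * x.val / n)
private noncomputable def Sz (x : ZMod n) : ℝ := Real.sin (2 * Real.pi * x.val / n)

private lemma Wmat_eq' (a b : ZMod n) : Wmat n a b =
    !![Cz n a, -Sz n a, 0, 0;
       Sz n a,  Cz n a, 0, 0;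
       0, 0, Cz n b, -Sz n b;
       0, 0, Sz n b,  Cz n b] := by
  unfold Wmat rotMat Cz Sz
  ext i j
  fin_cases i <;> fin_cases j <;>
    norm_num [Matrix.fromBlocks, finSumFinEquiv, Fin.addCases, Matrix.reindex_apply,
      Fin.castLT, Fin.subNat, Matrix.vecHead, Matrix.vecTail]

private lemma n_pos' : (0:ℝ) < n := by
  have := NeZero.pos n; exact_mod_cast this

private lemma angle_neg (x : ZMod n) :
    (2 * Real.pi * ((-x).val : ℝ) / n) = 2 * Real.pi - 2 * Real.pi * (x.val:ℝ) / n
      ∨ ((-x).val = 0 ∧ x.val = 0) := by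
  rcases eq_or_ne x 0 with h | h
  · right; simp [h]
  · left
    rw [ZMod.neg_val, if_neg h]
    have hv : x.val ≤ n := le_of_lt (ZMod.val_lt x)
    have hn := n_pos' n
    push_cast [Nat.cast_sub hv]
    field_simp

private lemma Cz_neg (x : ZMod n) : Cz n (-x) = Cz n x := by
  unfold Cz
  rcases angle_neg n x with h | ⟨h1, h2⟩
  · rw [h, Real.cos_two_pi_sub]
  · rw [h1, h2]

private lemma Sz_neg (x : ZMod n) : Sz n (-x) = - Sz n x := by
  unfold Sz
  rcases angle_neg n x with h | ⟨h1, h2⟩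
  · rw [h, Real.sin_two_pi_sub]
  · rw [h1, h2]; simp

private lemma real_div_eq₁ {u v : ℕ} {k : ℤ} (hn : (0:ℝ) < n)
    (h : 2*Real.pi*(v:ℝ)/n = 2*k*Real.pi + 2*Real.pi*(u:ℝ)/n) : ((v:ℤ) - u) = k * n := by
  have hπ := Real.pi_pos
  have hne : (n:ℝ) ≠ 0 := ne_of_gt hn
  have h2 : (2*Real.pi) * ((v:ℝ) - u) = (2*Real.pi) * ((k:ℝ)*n) := by
    field_simp at h
    nlinarith [h]
  have h3 : ((v:ℝ) - u) = (k:ℝ)*n := mul_left_cancel₀ (by positivity) h2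
  exact_mod_cast h3

private lemma real_div_eq₂ {u v : ℕ} {k : ℤ} (hn : (0:ℝ) < n)
    (h : 2*Real.pi*(v:ℝ)/n = 2*k*Real.pi - 2*Real.pi*(u:ℝ)/n) : ((v:ℤ) + u) = k * n := by
  have hπ := Real.pi_pos
  have hne : (n:ℝ) ≠ 0 := ne_of_gt hn
  have h2 : (2*Real.pi) * ((v:ℝ) + u) = (2*Real.pi) * ((k:ℝ)*n) := by
    field_simp at h
    nlinarith [h]
  have h3 : ((v:ℝ) + u) = (k:ℝ)*n := mul_left_cancel₀ (by positivity) h2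
  exact_mod_cast h3

private lemma Cz_inj {x y : ZMod n} (h : Cz n x = Cz n y) : x = y ∨ x = -y := by
  unfold Cz at h
  have hn := n_pos' n
  rw [Real.cos_eq_cos_iff] at h
  obtain ⟨k, h | h⟩ := h
  · left
    have hz := real_div_eq₁ n hn h
    have hdvd : (n:ℤ) ∣ ((y.val:ℤ) - x.val) := ⟨k, by linarith⟩
    have h0 : (((y.val:ℤ) - x.val : ℤ) : ZMod n) = 0 := by
      rw [ZMod.intCast_zmod_eq_zero_iff_dvd]; exact hdvd
    push_cast [ZMod.natCast_zmod_val] at h0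
    linear_combination -h0
  · right
    have hz := real_div_eq₂ n hn h
    have hdvd : (n:ℤ) ∣ ((y.val:ℤ) + x.val) := ⟨k, by linarith⟩
    have h0 : (((y.val:ℤ) + x.val : ℤ) : ZMod n) = 0 := by
      rw [ZMod.intCast_zmod_eq_zero_iff_dvd]; exact hdvd
    push_cast [ZMod.natCast_zmod_val] at h0
    linear_combination h0

private lemma Sz_zero {x : ZMod n} (h : Sz n x = 0) : x = -x := by
  unfold Sz at h
  have hn := n_pos' n
  rw [Real.sin_eq_zero_iff] at h
  obtain ⟨k, hk⟩ := h
  have h' : 2*Real.pi*((x.val:ℝ)) /n = 2*k*Real.pi - 2*Real.pi*(x.val:ℝ)/n := by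
    have hh : (k:ℝ) * Real.pi = 2*Real.pi*(x.val:ℝ)/n := hk
    have hπ := Real.pi_pos
    field_simp at hh ⊢
    nlinarith [hh]
  have hz := real_div_eq₂ n hn h'
  have hdvd : (n:ℤ) ∣ ((x.val:ℤ) + x.val) := ⟨k, by linarith⟩
  have h0 : (((x.val:ℤ) + x.val : ℤ) : ZMod n) = 0 := by
    rw [ZMod.intCast_zmod_eq_zero_iff_dvd]; exact hdvd
  push_cast [ZMod.natCast_zmod_val] at h0
  linear_combination h0

private lemma sc_sq (x : ZMod n) : Sz n x ^ 2 + Cz n x ^ 2 = 1 := Real.sin_sq_add_cos_sq _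

private lemma resolve {x y x' y' : ZMod n}
    (hx : x = x' ∨ x = -x') (hy : y = y' ∨ y = -y')
    (hp : Sz n x * Sz n y = Sz n x' * Sz n y') :
    (x = x' ∧ y = y') ∨ (x = -x' ∧ y = -y') := by
  rcases hx with hx | hx <;> rcases hy with hy | hy
  · exact Or.inl ⟨hx, hy⟩
  · have hsy : Sz n y = - Sz n y' := by rw [hy, Sz_neg]
    have hsx : Sz n x = Sz n x' := by rw [hx]
    rw [hsx, hsy] at hp
    have h0 : Sz n x' * Sz n y' = 0 := by linarith
    rcases mul_eq_zero.mp h0 with h | h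
    · exact Or.inr ⟨hx.trans (Sz_zero n h), hy⟩
    · exact Or.inl ⟨hx, hy.trans (Sz_zero n h).symm⟩
  · have hsx : Sz n x = - Sz n x' := by rw [hx, Sz_neg]
    have hsy : Sz n y = Sz n y' := by rw [hy]
    rw [hsx, hsy] at hp
    have h0 : Sz n x' * Sz n y' = 0 := by linarith
    rcases mul_eq_zero.mp h0 with h | h
    · exact Or.inl ⟨hx.trans (Sz_zero n h).symm, hy⟩
    · exact Or.inr ⟨hx, hy.trans (Sz_zero n h)⟩
  · exact Or.inr ⟨hx, hy⟩

end Aux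

private def Kmat : Matrix (Fin 4) (Fin 4) ℝ :=
  !![0,0,1,0; 0,0,0,1; 1,0,0,0; 0,1,0,0]

private def Dmat : Matrix (Fin 4) (Fin 4) ℝ :=
  !![1,0,0,0; 0,-1,0,0; 0,0,1,0; 0,0,0,-1]

private lemma Kmat_mul_self : Kmat * Kmat = 1 := by
  ext i j
  fin_cases i <;> fin_cases j <;>
    simp [Kmat, Matrix.mul_apply, Fin.sum_univ_four, Matrix.one_apply, Matrix.vecHead, Matrix.vecTail]

private lemma Dmat_mul_self : Dmat * Dmat = 1 := by
  ext i j
  fin_cases i <;> fin_cases j <;>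
    simp [Dmat, Matrix.mul_apply, Fin.sum_univ_four, Matrix.one_apply, Matrix.vecHead, Matrix.vecTail]

private lemma Kmat_symm : Kmatᵀ = Kmat := by
  ext i j
  fin_cases i <;> fin_cases j <;> simp [Kmat, Matrix.vecHead, Matrix.vecTail]

private lemma Dmat_symm : Dmatᵀ = Dmat := by
  ext i j
  fin_cases i <;> fin_cases j <;> simp [Dmat, Matrix.vecHead, Matrix.vecTail]

private lemma star_eq_transpose (P : Matrix (Fin 4) (Fin 4) ℝ) : star P = Pᵀ := by
  rw [Matrix.star_eq_conjTranspose, Matrix.conjTranspose_eq_transpose_of_trivial]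

private lemma Kmat_mem : Kmat ∈ Matrix.orthogonalGroup (Fin 4) ℝ := by
  rw [Matrix.mem_orthogonalGroup_iff, Kmat_symm]
  exact Kmat_mul_self

private lemma Dmat_mem : Dmat ∈ Matrix.orthogonalGroup (Fin 4) ℝ := by
  rw [Matrix.mem_orthogonalGroup_iff, Dmat_symm]
  exact Dmat_mul_self

private lemma Kmat_det : Kmat.det = 1 := by
  rw [det4']; simp [Kmat]

private lemma Dmat_det : Dmat.det = 1 := by
  rw [det4']; simp [Dmat]

private lemma Kmat_conj (n : ℕ) [NeZero n] (a b : ZMod n) :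
    Kmat * Wmat n a b * Kmat = Wmat n b a := by
  rw [Wmat_eq', Wmat_eq']
  ext i j
  fin_cases i <;> fin_cases j <;>
    simp [Kmat, Matrix.mul_apply, Fin.sum_univ_four, Matrix.vecHead, Matrix.vecTail]

private lemma Dmat_conj (n : ℕ) [NeZero n] (a b : ZMod n) :
    Dmat * Wmat n a b * Dmat = Wmat n (-a) (-b) := by
  rw [Wmat_eq', Wmat_eq', Cz_neg, Cz_neg, Sz_neg, Sz_neg]
  ext i j
  fin_cases i <;> fin_cases j <;>
    simp [Dmat, Matrix.mul_apply, Fin.sum_univ_four, Matrix.vecHead, Matrix.vecTail]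

theorem stmt_11 (n : ℕ) (hn : 1 ≤ n) (a b a' b' : ZMod n) :
    (∃ P : Matrix (Fin 4) (Fin 4) ℝ, P ∈ Matrix.orthogonalGroup (Fin 4) ℝ ∧
        P.det = 1 ∧ P⁻¹ * Wmat n a b * P = Wmat n a' b') ↔
      ((a = a' ∧ b = b') ∨ (a = b' ∧ b = a') ∨
        (a = -a' ∧ b = -b') ∨ (a = -b' ∧ b = -a')) := by
  haveI : NeZero n := ⟨by omega⟩
  constructor
  · rintro ⟨P, hPo, hPdet, hconj⟩
    rw [Matrix.mem_orthogonalGroup_iff] at hPo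
    have hPtP : Pᵀ * P = 1 := by rwa [mul_eq_one_comm] at hPo
    have hPinv : P⁻¹ = Pᵀ := Matrix.inv_eq_right_inv hPo
    rw [hPinv] at hconj
    -- trace invariant
    have htr : (Wmat n a' b').trace = (Wmat n a b).trace := by
      rw [← hconj, Matrix.trace_mul_cycle, hPo, Matrix.one_mul]
    have E1 : Cz n a + Cz n b = Cz n a' + Cz n b' := by
      rw [Wmat_eq', Wmat_eq'] at htr
      simp [Matrix.trace, Fin.sum_univ_four] at htr
      linarith
    -- trace of square invariant
    have hsq : Wmat n a' b' * Wmat n a' b' = Pᵀ * (Wmat n a b * Wmat n a b) * P := by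
      rw [← hconj]
      calc Pᵀ * Wmat n a b * P * (Pᵀ * Wmat n a b * P)
          = Pᵀ * Wmat n a b * (P * Pᵀ) * Wmat n a b * P := by
            simp only [Matrix.mul_assoc]
        _ = Pᵀ * (Wmat n a b * Wmat n a b) * P := by
            rw [hPo]; simp only [Matrix.mul_one, Matrix.mul_assoc]
    have htr2 : (Wmat n a' b' * Wmat n a' b').trace = (Wmat n a b * Wmat n a b).trace := by
      rw [hsq, Matrix.trace_mul_cycle, ← Matrix.mul_assoc, hPo, Matrix.one_mul]
    have E2 : Cz n a ^ 2 + Cz n b ^ 2 = Cz n a' ^ 2 + Cz n b' ^ 2 := by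
      rw [Wmat_eq', Wmat_eq'] at htr2
      simp [Matrix.trace, Fin.sum_univ_four, Matrix.mul_apply] at htr2
      have p1 := sc_sq n a; have p2 := sc_sq n b
      have p3 := sc_sq n a'; have p4 := sc_sq n b'
      nlinarith [htr2, p1, p2, p3, p4]
    -- Pfaffian invariant
    have hM : Wmat n a' b' =
        Pᵀ * !![Cz n a, -Sz n a, 0,0; Sz n a, Cz n a, 0,0;
                0,0, Cz n b, -Sz n b; 0,0, Sz n b, Cz n b] * P := by
      rw [← hconj, Wmat_eq']
    have E3' := pf_conj' (Cz n a) (Sz n a) (Cz n b) (Sz n b) P (Wmat n a' b') hM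
    rw [hPdet, one_mul, Wmat_eq'] at E3'
    simp [Matrix.cons_val_zero, Matrix.cons_val_one] at E3'
    have E3 : Sz n a * Sz n b = Sz n a' * Sz n b' := by
      rw [Wmat_eq'] at hM
      nlinarith [E3']
    -- quadratic resolution
    have hquad : (Cz n a - Cz n a') * (Cz n a - Cz n b') = 0 := by
      linear_combination (Cz n a - (Cz n a + Cz n b + Cz n a' + Cz n b')/2) * E1 + (1/2) * E2
    rcases mul_eq_zero.mp hquad with h | h
    · have ha : Cz n a = Cz n a' := by linarith
      have hb : Cz n b = Cz n b' := by linarith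
      rcases resolve n (Cz_inj n ha) (Cz_inj n hb) E3 with ⟨h1, h2⟩ | ⟨h1, h2⟩
      · exact Or.inl ⟨h1, h2⟩
      · exact Or.inr (Or.inr (Or.inl ⟨h1, h2⟩))
    · have ha : Cz n a = Cz n b' := by linarith
      have hb : Cz n b = Cz n a' := by linarith
      have E3'' : Sz n a * Sz n b = Sz n b' * Sz n a' := by linarith [E3]
      rcases resolve n (Cz_inj n ha) (Cz_inj n hb) E3'' with ⟨h1, h2⟩ | ⟨h1, h2⟩
      · exact Or.inr (Or.inl ⟨h1, h2⟩)
      · exact Or.inr (Or.inr (Or.inr ⟨h1, h2⟩))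
  · rintro (⟨ha, hb⟩ | ⟨ha, hb⟩ | ⟨ha, hb⟩ | ⟨ha, hb⟩)
    · subst ha; subst hb
      exact ⟨1, one_mem _, Matrix.det_one, by simp⟩
    · -- a = b', b = a' : use swap
      refine ⟨Kmat, Kmat_mem, Kmat_det, ?_⟩
      rw [Matrix.inv_eq_right_inv Kmat_mul_self, Kmat_conj n a b, ← ha, ← hb]
    · -- a = -a', b = -b' : use Dmat
      refine ⟨Dmat, Dmat_mem, Dmat_det, ?_⟩
      rw [Matrix.inv_eq_right_inv Dmat_mul_self, Dmat_conj n a b,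
        show -a = a' by rw [ha]; ring, show -b = b' by rw [hb]; ring]
    · -- a = -b', b = -a' : use Kmat * Dmat
      refine ⟨Kmat * Dmat, mul_mem Kmat_mem Dmat_mem, by rw [Matrix.det_mul, Kmat_det, Dmat_det]; ring, ?_⟩
      have hinv : (Kmat * Dmat)⁻¹ = Dmat * Kmat := by
        apply Matrix.inv_eq_right_inv
        calc Kmat * Dmat * (Dmat * Kmat) = Kmat * (Dmat * Dmat) * Kmat := by
              simp only [Matrix.mul_assoc]
          _ = 1 := by rw [Dmat_mul_self, Matrix.mul_one, Kmat_mul_self]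
      rw [hinv]
      calc Dmat * Kmat * Wmat n a b * (Kmat * Dmat)
          = Dmat * (Kmat * Wmat n a b * Kmat) * Dmat := by simp only [Matrix.mul_assoc]
        _ = Dmat * Wmat n b a * Dmat := by rw [Kmat_conj]
        _ = Wmat n (-b) (-a) := Dmat_conj n b a
        _ = Wmat n a' b' := by
            rw [show -b = a' by rw [hb]; ring, show -a = b' by rw [ha]; ring]
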